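/- Let x₁, x₂, x₃, x₄ ∈ ℝ² be four points with all six pairwise distances in the interval (1−ε, √2+ε), for ε > 0 sufficiently small. Then, up to relabeling, the points can be cyclically ordered so that |x_i − x_{i+1}| = 1 + O(ε) for the four sides, the interior angles satisfy ∠x_i x_{i+1} x_{i+2} = 90° + O(ε), and the two diagonals satisfy |x_i − x_{i+2}| = √2 + O(ε). -/

import Mathlib

open Real
set_option maxHeartbeats 2000000


-- |A| ≤ D/2 from the two upper constraints
private lemma lensA (D A B : ℝ) (hD : 0 < D)
    (hu1 : (A+D/2)^2+B^2 ≤ D^2) (hu2 : (A-D/2)^2+B^2 ≤ D^2) :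
    -(D/2) ≤ A ∧ A ≤ D/2 := by
  constructor
  · nlinarith [sq_nonneg B]
  · nlinarith [sq_nonneg B]

-- 2AD bound
private lemma lensAD (m2 D A B : ℝ)
    (hl2 : m2 < (A-D/2)^2+B^2) (hu1 : (A+D/2)^2+B^2 ≤ D^2) :
    2*A*D ≤ D^2 - m2 := by nlinarith

-- B² lower bound
private lemma lensBl (m2 D A B : ℝ) (hD : 0 < D)
    (hl1 : m2 < (A+D/2)^2+B^2) (hl2 : m2 < (A-D/2)^2+B^2)
    (hu1 : (A+D/2)^2+B^2 ≤ D^2) (hu2 : (A-D/2)^2+B^2 ≤ D^2) :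
    m2 - D^2/4 ≤ B^2 := by
  obtain ⟨hal, hau⟩ := lensA D A B hD hu1 hu2
  rcases le_or_gt 0 A with h | h
  · nlinarith [mul_nonneg h (by linarith : 0 ≤ D - A)]
  · nlinarith [mul_nonneg (by linarith : 0 ≤ -A) (by linarith : 0 ≤ D + A)]

-- B² upper bound
private lemma lensBu (D A B : ℝ)
    (hu1 : (A+D/2)^2+B^2 ≤ D^2) (hu2 : (A-D/2)^2+B^2 ≤ D^2) :
    B^2 ≤ 3/4*D^2 := by nlinarith [sq_nonneg A]

-- A-difference bound (for the same-sign contradiction)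
private lemma lensAdiff (ε D A1 A3 : ℝ) (hε0 : 0 < ε)
    (ht_lo : (0.998:ℝ) < D^2) (ht_hi : D^2 ≤ 2.0029) (hm2 : (0.998:ℝ) ≤ (1-ε)^2)
    (h1 : 2*A1*D ≤ D^2 - (1-ε)^2) (h2 : -(D^2 - (1-ε)^2) ≤ 2*A1*D)
    (h3 : 2*A3*D ≤ D^2 - (1-ε)^2) (h4 : -(D^2 - (1-ε)^2) ≤ 2*A3*D) :
    (A1-A3)^2 ≤ 0.51 := by
  have hy : (0:ℝ) ≤ D^2 - (1-ε)^2 := by linarith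
  have hsq : (2*(A1-A3)*D)^2 ≤ (2*(D^2-(1-ε)^2))^2 := by nlinarith
  have hkey : (D^2-(1-ε)^2)^2 ≤ 0.51 * D^2 := by
    nlinarith [mul_nonneg (by nlinarith : (0:ℝ) ≤ D^2 - 0.998) (by nlinarith : (0:ℝ) ≤ 2.0029 - D^2)]
  nlinarith [ht_lo]

-- same-sign B difference bound
private lemma lensBdiff (B1 B3 : ℝ) (hc : 0 ≤ B1*B3)
    (b1l : (0.497:ℝ) ≤ B1^2) (b1u : B1^2 ≤ 1.5022)
    (b3l : (0.497:ℝ) ≤ B3^2) (b3u : B3^2 ≤ 1.5022) :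
    (B1-B3)^2 ≤ 0.2713 := by
  rcases le_or_gt 0 B1 with h1 | h1
  · have hb3pos : 0 ≤ B3 := by
      rcases eq_or_lt_of_le h1 with h1' | h1'
      · nlinarith
      · by_contra h3
        push_neg at h3
        nlinarith [mul_pos h1' (by linarith : 0 < -B3)]
    have e1 : (0.7049:ℝ) ≤ B1 := by nlinarith
    have e2 : B1 ≤ 1.2257 := by nlinarith
    have e3 : (0.7049:ℝ) ≤ B3 := by nlinarith
    have e4 : B3 ≤ 1.2257 := by nlinarith
    nlinarith
  · have hb3neg : B3 ≤ 0 := by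
      by_contra h3
      push_neg at h3
      nlinarith [mul_pos (by linarith : 0 < -B1) h3]
    have e1 : (0.7049:ℝ) ≤ -B1 := by nlinarith
    have e2 : -B1 ≤ 1.2257 := by nlinarith
    have e3 : (0.7049:ℝ) ≤ -B3 := by nlinarith
    have e4 : -B3 ≤ 1.2257 := by nlinarith
    nlinarith



-- product lower bound: u v ≥ c
private lemma prodLB (u v c : ℝ) (hu : 0 ≤ u) (hv : 0 ≤ v) (hc : 0 ≤ c)
    (h1 : c ≤ u^2) (h2 : c ≤ v^2) : c ≤ u*v := by
  nlinarith [mul_nonneg (by linarith : 0 ≤ u^2 - c) (by linarith : 0 ≤ v^2 - c),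
    mul_nonneg hu hv, sq_nonneg (u*v - c), sq_nonneg (u*v + c)]

-- refined upper bound on u², v² when opposite lobes
private lemma lobeUB (ε s2 u v : ℝ) (hε0 : 0 < ε) (hε1 : ε < 1/1000)
    (hs2 : s2^2 = 2) (hs2a : (1.414:ℝ) ≤ s2) (hs2b : s2 ≤ 1.41422)
    (hu : 0 ≤ u) (hv : 0 ≤ v)
    (hsum : (u+v)^2 ≤ 2+2.9*ε)
    (hu2 : 1/2 - 2.75*ε ≤ u^2) (hv2 : 1/2 - 2.75*ε ≤ v^2) :
    u^2 ≤ 1/2 + 5.4*ε ∧ v^2 ≤ 1/2 + 5.4*ε := by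
  have hv0 : (0:ℝ) ≤ s2/2 - 2.75*ε := by nlinarith
  have hvl : s2/2 - 2.75*ε ≤ v := by nlinarith
  have hul : s2/2 - 2.75*ε ≤ u := by nlinarith
  have hsl : u + v ≤ s2 + 1.03*ε := by nlinarith [sq_nonneg (u+v)]
  have huu : u ≤ s2/2 + 3.78*ε := by linarith
  have hvu : v ≤ s2/2 + 3.78*ε := by linarith
  have c1 := mul_self_le_mul_self hu huu
  have c2 := mul_self_le_mul_self hv hvu
  constructor
  · nlinarith [c1]
  · nlinarith [c2]

-- refined |A| bound
private lemma refinedA (ε D A B s2 : ℝ) (hε0 : 0 < ε) (hε1 : ε < 1/1000)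
    (hs2 : s2^2 = 2) (hs2a : (1.414:ℝ) ≤ s2) (hs2b : s2 ≤ 1.41422)
    (hD : 0 < D) (hDu : D ≤ s2 + ε)
    (hal : -(D/2) ≤ A) (hau : A ≤ D/2)
    (hl1 : (1-ε)^2 < (A+D/2)^2+B^2) (hl2 : (1-ε)^2 < (A-D/2)^2+B^2)
    (hBu : B^2 ≤ 1/2 + 5.4*ε) :
    -(8*ε) ≤ A ∧ A ≤ 8*ε := by
  have key : (0:ℝ) ≤ s2/2 - 7.5*ε := by nlinarith
  rcases le_or_gt 0 A with h | h
  · have h1 : (s2/2 - 7.5*ε)^2 ≤ (D/2 - A)^2 := by nlinarith [hl2, hBu, sq_nonneg ε]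
    have h2 : s2/2 - 7.5*ε ≤ D/2 - A := by nlinarith [key, h1]
    constructor
    · linarith
    · nlinarith [h2, hDu]
  · have h1 : (s2/2 - 7.5*ε)^2 ≤ (D/2 + A)^2 := by nlinarith [hl1, hBu, sq_nonneg ε]
    have h2 : s2/2 - 7.5*ε ≤ D/2 + A := by nlinarith [key, h1]
    constructor
    · nlinarith [h2, hDu]
    · linarith

-- side bound: x near s2/2, B² near 1/2
private lemma sideBound (ε x B s2 : ℝ) (hε0 : 0 < ε) (hε1 : ε < 1/1000)
    (hs2 : s2^2 = 2) (hs2a : (1.414:ℝ) ≤ s2) (hs2b : s2 ≤ 1.41422)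
    (hxl : s2/2 - 9*ε ≤ x) (hxu : x ≤ s2/2 + 9*ε)
    (hBl : 1/2 - 2.75*ε ≤ B^2) (hBu : B^2 ≤ 1/2 + 5.4*ε) :
    |x^2 + B^2 - 1| ≤ 19*ε := by
  have hx0 : (0:ℝ) ≤ s2/2 - 9*ε := by nlinarith
  have h1 : x^2 ≤ (s2/2 + 9*ε)^2 := by nlinarith [mul_self_le_mul_self (le_trans hx0 hxl) hxu]
  have h2 : (s2/2 - 9*ε)^2 ≤ x^2 := by nlinarith [mul_self_le_mul_self hx0 hxl]
  rw [abs_le]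
  constructor
  · nlinarith
  · nlinarith

private lemma core_sq (ε D A1 B1 A3 B3 s2 : ℝ) (hε0 : 0 < ε) (hε1 : ε < 1/1000)
    (hs2 : s2^2 = 2) (hs2pos : 0 < s2)
    (hDpos : 0 < D) (hDu : D ≤ s2 + ε)
    (h01l : (1-ε)^2 < (A1+D/2)^2+B1^2) (h01u : (A1+D/2)^2+B1^2 ≤ D^2)
    (h12l : (1-ε)^2 < (A1-D/2)^2+B1^2) (h12u : (A1-D/2)^2+B1^2 ≤ D^2)
    (h03l : (1-ε)^2 < (A3+D/2)^2+B3^2) (h03u : (A3+D/2)^2+B3^2 ≤ D^2)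
    (h23l : (1-ε)^2 < (A3-D/2)^2+B3^2) (h23u : (A3-D/2)^2+B3^2 ≤ D^2)
    (h13l : (1-ε)^2 < (A1-A3)^2+(B1-B3)^2) (h13u : (A1-A3)^2+(B1-B3)^2 ≤ D^2) :
    |(A1+D/2)^2+B1^2 - 1| ≤ 19*ε ∧ |(A1-D/2)^2+B1^2 - 1| ≤ 19*ε ∧
    |(A3+D/2)^2+B3^2 - 1| ≤ 19*ε ∧ |(A3-D/2)^2+B3^2 - 1| ≤ 19*ε ∧
    |D^2 - 2| ≤ 4*ε ∧ |(A1-A3)^2+(B1-B3)^2 - 2| ≤ 11*ε := by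
  have hs2a : (1.414:ℝ) ≤ s2 := by
    clear * - hs2 hs2pos; nlinarith
  have hs2b : s2 ≤ 1.41422 := by
    clear * - hs2 hs2pos; nlinarith
  have hm2 : (0.998 : ℝ) ≤ (1-ε)^2 := by
    clear * - hε0 hε1; nlinarith
  have ht_hi : D^2 ≤ 2.0029 := by
    have k1 := mul_self_le_mul_self hDpos.le hDu
    clear * - k1 hs2 hs2a hs2b hε0 hε1; nlinarith
  have ht_lo : (0.998:ℝ) < D^2 := lt_of_le_of_lt hm2 (lt_of_lt_of_le h01l h01u)
  obtain ⟨ha1l, ha1u⟩ := lensA D A1 B1 hDpos h01u h12u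
  obtain ⟨ha3l, ha3u⟩ := lensA D A3 B3 hDpos h03u h23u
  have hA1u := lensAD ((1-ε)^2) D A1 B1 h12l h01u
  have hA1l : -(D^2 - (1-ε)^2) ≤ 2*A1*D := by
    have h01l' : (1-ε)^2 < (-A1-D/2)^2+B1^2 := by
      rw [show (-A1-D/2)^2 = (A1+D/2)^2 from by ring]; exact h01l
    have h12u' : (-A1+D/2)^2+B1^2 ≤ D^2 := by
      rw [show (-A1+D/2)^2 = (A1-D/2)^2 from by ring]; exact h12u
    have := lensAD ((1-ε)^2) D (-A1) B1 h01l' h12u'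
    linarith
  have hA3u := lensAD ((1-ε)^2) D A3 B3 h23l h03u
  have hA3l : -(D^2 - (1-ε)^2) ≤ 2*A3*D := by
    have h03l' : (1-ε)^2 < (-A3-D/2)^2+B3^2 := by
      rw [show (-A3-D/2)^2 = (A3+D/2)^2 from by ring]; exact h03l
    have h23u' : (-A3+D/2)^2+B3^2 ≤ D^2 := by
      rw [show (-A3+D/2)^2 = (A3-D/2)^2 from by ring]; exact h23u
    have := lensAD ((1-ε)^2) D (-A3) B3 h03l' h23u'
    linarith
  have hb1l := lensBl ((1-ε)^2) D A1 B1 hDpos h01l h12l h01u h12u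
  have hb3l := lensBl ((1-ε)^2) D A3 B3 hDpos h03l h23l h03u h23u
  have hb1u := lensBu D A1 B1 h01u h12u
  have hb3u := lensBu D A3 B3 h03u h23u
  have hb1β : (0.497:ℝ) ≤ B1^2 := by linarith
  have hb3β : (0.497:ℝ) ≤ B3^2 := by linarith
  have hb1B : B1^2 ≤ 1.5022 := by linarith
  have hb3B : B3^2 ≤ 1.5022 := by linarith
  -- opposite signs
  have hbb : B1 * B3 < 0 := by
    by_contra hc
    push_neg at hc
    have hAd := lensAdiff ε D A1 A3 hε0 ht_lo ht_hi hm2 hA1u hA1l hA3u hA3l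
    have hBd := lensBdiff B1 B3 hc hb1β hb1B hb3β hb3B
    linarith
  -- products
  have huv : |B1| * |B3| = -(B1*B3) := by
    rw [← abs_mul]; exact abs_of_neg hbb
  have hc0 : (0:ℝ) ≤ (1-ε)^2 - D^2/4 := by linarith
  have hprod : (1-ε)^2 - D^2/4 ≤ |B1| * |B3| :=
    prodLB _ _ _ (abs_nonneg B1) (abs_nonneg B3) hc0
      (by rw [sq_abs]; exact hb1l) (by rw [sq_abs]; exact hb3l)
  have hexp : (B1-B3)^2 = B1^2 + B3^2 + 2*(|B1| * |B3|) := by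
    rw [huv]; ring
  have hs13l4c : 4*((1-ε)^2) - D^2 ≤ (B1-B3)^2 := by linarith
  have ht2lo : 2 - 4*ε ≤ D^2 := by
    have k1 := hs13l4c; have k2 := h13u; have k3 := sq_nonneg (A1-A3)
    clear * - k1 k2 k3 hε0 hε1
    nlinarith [sq_nonneg ε]
  have ht2hi : D^2 ≤ 2 + 2.9*ε := by
    have k1 := mul_self_le_mul_self hDpos.le hDu
    clear * - k1 hε0 hε1 hs2 hs2a hs2b
    nlinarith [sq_nonneg ε]
  -- diag bounds
  have hdiag1 : |D^2 - 2| ≤ 4*ε := abs_le.2 ⟨by linarith, by linarith⟩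
  have hdiag2 : |(A1-A3)^2+(B1-B3)^2 - 2| ≤ 11*ε := by
    have k1 := hs13l4c; have k2 := h13u; have k3 := sq_nonneg (A1-A3)
    rw [abs_le]
    constructor
    · clear * - k1 k2 k3 hε0 hε1 ht2hi
      nlinarith [sq_nonneg ε]
    · linarith
  -- refined b bounds
  have hb1l2 : 1/2 - 2.75*ε ≤ B1^2 := by
    have k1 := hb1l
    clear * - k1 hε0 hε1 ht2hi
    nlinarith [sq_nonneg ε]
  have hb3l2 : 1/2 - 2.75*ε ≤ B3^2 := by
    have k1 := hb3l
    clear * - k1 hε0 hε1 ht2hi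
    nlinarith [sq_nonneg ε]
  have hsumuv : (|B1| + |B3|)^2 ≤ 2+2.9*ε := by
    have e2 : (|B1| + |B3|)^2 = (B1-B3)^2 := by
      calc (|B1| + |B3|)^2 = |B1|^2 + 2*(|B1| * |B3|) + |B3|^2 := by ring
        _ = B1^2 + 2*(-(B1*B3)) + B3^2 := by rw [sq_abs, sq_abs, huv]
        _ = (B1-B3)^2 := by ring
    have k3 := sq_nonneg (A1-A3)
    clear * - e2 k3 h13u ht2hi
    nlinarith
  obtain ⟨hb1u2', hb3u2'⟩ := lobeUB ε s2 (|B1|) (|B3|) hε0 hε1 hs2 hs2a hs2b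
    (abs_nonneg _) (abs_nonneg _) hsumuv
    (by rw [sq_abs]; exact hb1l2) (by rw [sq_abs]; exact hb3l2)
  have hb1u2 : B1^2 ≤ 1/2 + 5.4*ε := by rw [← sq_abs]; exact hb1u2'
  have hb3u2 : B3^2 ≤ 1/2 + 5.4*ε := by rw [← sq_abs]; exact hb3u2'
  -- refined A bounds
  obtain ⟨hA1l2, hA1u2⟩ := refinedA ε D A1 B1 s2 hε0 hε1 hs2 hs2a hs2b hDpos hDu
    ha1l ha1u h01l h12l hb1u2
  obtain ⟨hA3l2, hA3u2⟩ := refinedA ε D A3 B3 s2 hε0 hε1 hs2 hs2a hs2b hDpos hDu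
    ha3l ha3u h03l h23l hb3u2
  -- refined D bounds
  have hDlo2 : s2 - 2*ε ≤ D := by
    clear * - ht2lo hε0 hε1 hs2 hs2a hs2b hDpos
    have k : (s2-2*ε)^2 ≤ D^2 := by nlinarith [sq_nonneg ε]
    nlinarith [k]
  -- sides
  have side1 : |(A1+D/2)^2+B1^2 - 1| ≤ 19*ε :=
    sideBound ε (A1+D/2) B1 s2 hε0 hε1 hs2 hs2a hs2b
      (by linarith) (by linarith) hb1l2 hb1u2
  have side2 : |(A1-D/2)^2+B1^2 - 1| ≤ 19*ε := by
    have := sideBound ε (D/2-A1) B1 s2 hε0 hε1 hs2 hs2a hs2b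
      (by linarith) (by linarith) hb1l2 hb1u2
    rw [show (D/2-A1)^2 = (A1-D/2)^2 from by ring] at this
    exact this
  have side3 : |(A3+D/2)^2+B3^2 - 1| ≤ 19*ε :=
    sideBound ε (A3+D/2) B3 s2 hε0 hε1 hs2 hs2a hs2b
      (by linarith) (by linarith) hb3l2 hb3u2
  have side4 : |(A3-D/2)^2+B3^2 - 1| ≤ 19*ε := by
    have := sideBound ε (D/2-A3) B3 s2 hε0 hε1 hs2 hs2a hs2b
      (by linarith) (by linarith) hb3l2 hb3u2
    rw [show (D/2-A3)^2 = (A3-D/2)^2 from by ring] at this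
    exact this
  exact ⟨side1, side2, side3, side4, hdiag1, hdiag2⟩

private lemma jordan {θ : ℝ} (h0 : 0 ≤ θ) (h1 : θ ≤ π) :
    |θ - π/2| ≤ π/2 * |Real.cos θ| := by
  have hπ : (0:ℝ) < π := Real.pi_pos
  rcases le_total θ (π/2) with h | h
  · have hj := Real.mul_le_sin (x := π/2 - θ) (by linarith) (by linarith)
    rw [Real.sin_pi_div_two_sub] at hj
    have hcos : 0 ≤ Real.cos θ := Real.cos_nonneg_of_mem_Icc ⟨by linarith, h⟩
    rw [abs_of_nonpos (by linarith), abs_of_nonneg hcos]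
    have e : -(θ - π/2) = π/2 * (2/π * (π/2 - θ)) := by field_simp; ring
    rw [e]
    have : (0:ℝ) ≤ π/2 := by linarith
    exact mul_le_mul_of_nonneg_left hj this
  · have hj := Real.mul_le_sin (x := θ - π/2) (by linarith) (by linarith)
    have hc : Real.cos θ = -Real.sin (θ - π/2) := by
      rw [← Real.cos_add_pi_div_two (θ - π/2)]
      congr 1
      ring
    have hs : 0 ≤ Real.sin (θ - π/2) :=
      Real.sin_nonneg_of_nonneg_of_le_pi (by linarith) (by linarith)
    rw [abs_of_nonneg (by linarith), hc, abs_neg, abs_of_nonneg hs]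
    have e : θ - π/2 = π/2 * (2/π * (θ - π/2)) := by field_simp
    nlinarith
-- squared-to-linear conversions
private lemma sq_to_one {d c : ℝ} (hd : 0 ≤ d) (h : |d^2 - 1| ≤ c) : |d - 1| ≤ c := by
  rw [abs_le] at h ⊢
  rcases le_total 1 d with h1 | h1
  · constructor <;> nlinarith
  · constructor <;> nlinarith
private lemma sq_to_sqrt2 {d c s2 : ℝ} (hd : 0 ≤ d) (hs2 : s2^2 = 2) (hs2a : (1.414:ℝ) ≤ s2)
    (h : |d^2 - 2| ≤ c) (hc : 0 ≤ c) : |d - s2| ≤ c := by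
  rw [abs_le] at h ⊢
  rcases le_total s2 d with h1 | h1
  · constructor <;> nlinarith
  · constructor <;> nlinarith
-- angle bound from (squared) distance bounds
private lemma angle_bound {ε : ℝ} (hε0 : 0 < ε) (hε1 : ε < 1/1000)
    (p q r : EuclideanSpace ℝ (Fin 2))
    (h1 : |dist p q ^ 2 - 1| ≤ 19*ε) (h2 : |dist r q ^ 2 - 1| ≤ 19*ε)
    (h3 : |dist p r ^ 2 - 2| ≤ 11*ε) :
    |EuclideanGeometry.angle p q r - π/2| ≤ 50*ε := by
  have hlaw := EuclideanGeometry.law_cos p q r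
  have hθ0 := EuclideanGeometry.angle_nonneg p q r
  have hθπ := EuclideanGeometry.angle_le_pi p q r
  set θ := EuclideanGeometry.angle p q r
  rw [abs_le] at h1 h2 h3
  have hd1n : (0:ℝ) ≤ dist p q := dist_nonneg
  have hd2n : (0:ℝ) ≤ dist r q := dist_nonneg
  have hd1 : (0.98:ℝ) ≤ dist p q := by nlinarith
  have hd2 : (0.98:ℝ) ≤ dist r q := by nlinarith
  have hd1u : dist p q ≤ 1.01 := by nlinarith
  have hd2u : dist r q ≤ 1.01 := by nlinarith
  have hden : (1.92:ℝ) ≤ 2 * dist p q * dist r q := by nlinarith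
  have hdenu : 2 * dist p q * dist r q ≤ 2.05 := by nlinarith
  have hcos1 : Real.cos θ ≤ 26*ε := by nlinarith [Real.neg_one_le_cos θ, Real.cos_le_one θ]
  have hcos2 : -(26*ε) ≤ Real.cos θ := by nlinarith [Real.neg_one_le_cos θ, Real.cos_le_one θ]
  have hj := jordan hθ0 hθπ
  have hcabs : |Real.cos θ| ≤ 26*ε := abs_le.2 ⟨hcos2, hcos1⟩
  have hπ : π < 3.15 := Real.pi_lt_d2
  have hπ0 : (0:ℝ) < π := Real.pi_pos
  calc |θ - π/2| ≤ π/2 * |Real.cos θ| := hj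
    _ ≤ 3.15/2 * (26*ε) := by
        apply mul_le_mul (by linarith) hcabs (abs_nonneg _) (by norm_num)
    _ ≤ 50*ε := by nlinarith

private noncomputable def cA (p0 p1 q0 q1 u0 u1 D : ℝ) : ℝ :=
  ((u0 - (p0+q0)/2)*(q0-p0) + (u1 - (p1+q1)/2)*(q1-p1))/D
private noncomputable def cB (p0 p1 q0 q1 u0 u1 D : ℝ) : ℝ :=
  (-(u0 - (p0+q0)/2)*(q1-p1) + (u1 - (p1+q1)/2)*(q0-p0))/D

private lemma cKey (p0 p1 q0 q1 u0 u1 v0 v1 D : ℝ) (hD : D ≠ 0)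
    (hDsq : D^2 = (q0-p0)^2+(q1-p1)^2) :
    (u0-v0)^2 + (u1-v1)^2 =
      (cA p0 p1 q0 q1 u0 u1 D - cA p0 p1 q0 q1 v0 v1 D)^2 +
      (cB p0 p1 q0 q1 u0 u1 D - cB p0 p1 q0 q1 v0 v1 D)^2 := by
  unfold cA cB
  field_simp
  linear_combination (4*((u0-v0)^2 + (u1-v1)^2)) * hDsq

private lemma cA_p (p0 p1 q0 q1 D : ℝ) (hD : D ≠ 0)
    (hDsq : D^2 = (q0-p0)^2+(q1-p1)^2) : cA p0 p1 q0 q1 p0 p1 D = -(D/2) := by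
  unfold cA; field_simp; linear_combination (1:ℝ) * hDsq
private lemma cB_p (p0 p1 q0 q1 D : ℝ) (hD : D ≠ 0)
    (hDsq : D^2 = (q0-p0)^2+(q1-p1)^2) : cB p0 p1 q0 q1 p0 p1 D = 0 := by
  unfold cB; field_simp; ring
private lemma cA_q (p0 p1 q0 q1 D : ℝ) (hD : D ≠ 0)
    (hDsq : D^2 = (q0-p0)^2+(q1-p1)^2) : cA p0 p1 q0 q1 q0 q1 D = D/2 := by
  unfold cA; field_simp; linear_combination (-(1:ℝ)) * hDsq
private lemma cB_q (p0 p1 q0 q1 D : ℝ) (hD : D ≠ 0)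
    (hDsq : D^2 = (q0-p0)^2+(q1-p1)^2) : cB p0 p1 q0 q1 q0 q1 D = 0 := by
  unfold cB; field_simp; ring

private lemma four_point (ε : ℝ) (hε0 : 0 < ε) (hε1 : ε < 1/1000)
    (y : Fin 4 → EuclideanSpace ℝ (Fin 2))
    (hy : ∀ i j : Fin 4, i ≠ j → dist (y i) (y j) ∈ Set.Ioo (1 - ε) (Real.sqrt 2 + ε))
    (hmax : ∀ i j : Fin 4, dist (y i) (y j) ≤ dist (y 0) (y 2)) :
    ∀ i : Fin 4, |dist (y i) (y (i+1)) - 1| ≤ 50*ε ∧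
      |EuclideanGeometry.angle (y i) (y (i+1)) (y (i+2)) - π/2| ≤ 50*ε ∧
      |dist (y i) (y (i+2)) - Real.sqrt 2| ≤ 50*ε := by
  have hs2 : (Real.sqrt 2)^2 = 2 := Real.sq_sqrt (by norm_num)
  have hs2pos : (0:ℝ) < Real.sqrt 2 := Real.sqrt_pos.2 (by norm_num)
  have hs2a : (1.414:ℝ) ≤ Real.sqrt 2 := by nlinarith
  have hdist2 : ∀ i j : Fin 4, dist (y i) (y j)^2 = (y i 0 - y j 0)^2 + (y i 1 - y j 1)^2 := by
    intro i j
    rw [EuclideanSpace.dist_eq, Real.sq_sqrt (by positivity)]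
    simp [Fin.sum_univ_two, Real.dist_eq, sq_abs]
  have h02 := hy 0 2 (by decide)
  set D := dist (y 0) (y 2) with hDD
  have hD0 : (0:ℝ) < D := by
    have := h02.1
    linarith
  have hDne : D ≠ 0 := ne_of_gt hD0
  have hDsq : D^2 = (y 2 0 - y 0 0)^2 + (y 2 1 - y 0 1)^2 := by
    rw [hdist2 0 2]; ring
  set A1 := cA (y 0 0) (y 0 1) (y 2 0) (y 2 1) (y 1 0) (y 1 1) D with hA1
  set B1 := cB (y 0 0) (y 0 1) (y 2 0) (y 2 1) (y 1 0) (y 1 1) D with hB1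
  set A3 := cA (y 0 0) (y 0 1) (y 2 0) (y 2 1) (y 3 0) (y 3 1) D with hA3
  set B3 := cB (y 0 0) (y 0 1) (y 2 0) (y 2 1) (y 3 0) (y 3 1) D with hB3
  have cap := cA_p (y 0 0) (y 0 1) (y 2 0) (y 2 1) D hDne hDsq
  have cbp := cB_p (y 0 0) (y 0 1) (y 2 0) (y 2 1) D hDne hDsq
  have caq := cA_q (y 0 0) (y 0 1) (y 2 0) (y 2 1) D hDne hDsq
  have cbq := cB_q (y 0 0) (y 0 1) (y 2 0) (y 2 1) D hDne hDsq
  have s01 : dist (y 0) (y 1)^2 = (A1 + D/2)^2 + B1^2 := by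
    have e := cKey (y 0 0) (y 0 1) (y 2 0) (y 2 1) (y 1 0) (y 1 1) (y 0 0) (y 0 1) D hDne hDsq
    rw [cap, cbp] at e
    rw [dist_comm, hdist2 1 0, e]; ring
  have s12 : dist (y 1) (y 2)^2 = (A1 - D/2)^2 + B1^2 := by
    have e := cKey (y 0 0) (y 0 1) (y 2 0) (y 2 1) (y 1 0) (y 1 1) (y 2 0) (y 2 1) D hDne hDsq
    rw [caq, cbq] at e
    rw [hdist2 1 2, e]; ring
  have s03 : dist (y 0) (y 3)^2 = (A3 + D/2)^2 + B3^2 := by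
    have e := cKey (y 0 0) (y 0 1) (y 2 0) (y 2 1) (y 3 0) (y 3 1) (y 0 0) (y 0 1) D hDne hDsq
    rw [cap, cbp] at e
    rw [dist_comm, hdist2 3 0, e]; ring
  have s23 : dist (y 2) (y 3)^2 = (A3 - D/2)^2 + B3^2 := by
    have e := cKey (y 0 0) (y 0 1) (y 2 0) (y 2 1) (y 3 0) (y 3 1) (y 2 0) (y 2 1) D hDne hDsq
    rw [caq, cbq] at e
    rw [dist_comm, hdist2 3 2, e]; ring
  have s13 : dist (y 1) (y 3)^2 = (A1 - A3)^2 + (B1 - B3)^2 := by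
    have e := cKey (y 0 0) (y 0 1) (y 2 0) (y 2 1) (y 1 0) (y 1 1) (y 3 0) (y 3 1) D hDne hDsq
    rw [hdist2 1 3, e]
  have lo : ∀ i j : Fin 4, i ≠ j → (1-ε)^2 < dist (y i) (y j)^2 := by
    intro i j h
    have h' := (hy i j h).1
    have hd : (0:ℝ) ≤ dist (y i) (y j) := dist_nonneg
    nlinarith
  have up : ∀ i j : Fin 4, dist (y i) (y j)^2 ≤ D^2 := by
    intro i j
    have h' := hmax i j
    have hd : (0:ℝ) ≤ dist (y i) (y j) := dist_nonneg
    nlinarith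
  have hDu : D ≤ Real.sqrt 2 + ε := le_of_lt h02.2
  have core := core_sq ε D A1 B1 A3 B3 (Real.sqrt 2) hε0 hε1 hs2 hs2pos hD0 hDu
    (by have := lo 0 1 (by decide); rwa [s01] at this)
    (by have := up 0 1; rwa [s01] at this)
    (by have := lo 1 2 (by decide); rwa [s12] at this)
    (by have := up 1 2; rwa [s12] at this)
    (by have := lo 0 3 (by decide); rwa [s03] at this)
    (by have := up 0 3; rwa [s03] at this)
    (by have := lo 2 3 (by decide); rwa [s23] at this)
    (by have := up 2 3; rwa [s23] at this)
    (by have := lo 1 3 (by decide); rwa [s13] at this)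
    (by have := up 1 3; rwa [s13] at this)
  obtain ⟨c01, c12, c03, c23, cDD, c13⟩ := core
  rw [← s01] at c01
  rw [← s12] at c12
  rw [← s03] at c03
  rw [← s23] at c23
  rw [← s13] at c13
  have cD' : |dist (y 0) (y 2)^2 - 2| ≤ 11*ε := by
    rw [← hDD]
    exact le_trans cDD (by linarith)
  -- commuted versions
  have c21 : |dist (y 2) (y 1)^2 - 1| ≤ 19*ε := by rwa [dist_comm]
  have c32 : |dist (y 3) (y 2)^2 - 1| ≤ 19*ε := by rwa [dist_comm]
  have c30 : |dist (y 3) (y 0)^2 - 1| ≤ 19*ε := by rwa [dist_comm]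
  have c10 : |dist (y 1) (y 0)^2 - 1| ≤ 19*ε := by rwa [dist_comm]
  have c20' : |dist (y 2) (y 0)^2 - 2| ≤ 11*ε := by rwa [dist_comm]
  have c31' : |dist (y 3) (y 1)^2 - 2| ≤ 11*ε := by rwa [dist_comm]
  -- linear distance bounds
  have d01 := sq_to_one dist_nonneg c01
  have d12 := sq_to_one dist_nonneg c12
  have d23 : |dist (y 2) (y 3) - 1| ≤ 19*ε := sq_to_one dist_nonneg c23
  have d30 : |dist (y 3) (y 0) - 1| ≤ 19*ε := sq_to_one dist_nonneg c30
  have g02 : |dist (y 0) (y 2) - Real.sqrt 2| ≤ 11*ε :=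
    sq_to_sqrt2 dist_nonneg hs2 hs2a cD' (by linarith)
  have g13 : |dist (y 1) (y 3) - Real.sqrt 2| ≤ 11*ε :=
    sq_to_sqrt2 dist_nonneg hs2 hs2a c13 (by linarith)
  have g20 : |dist (y 2) (y 0) - Real.sqrt 2| ≤ 11*ε :=
    sq_to_sqrt2 dist_nonneg hs2 hs2a c20' (by linarith)
  have g31 : |dist (y 3) (y 1) - Real.sqrt 2| ≤ 11*ε :=
    sq_to_sqrt2 dist_nonneg hs2 hs2a c31' (by linarith)
  -- angles
  have ang0 := angle_bound hε0 hε1 (y 0) (y 1) (y 2) c01 c21 cD'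
  have ang1 := angle_bound hε0 hε1 (y 1) (y 2) (y 3) c12 c32 c13
  have ang2 := angle_bound hε0 hε1 (y 2) (y 3) (y 0) c23 c03 c20'
  have ang3 := angle_bound hε0 hε1 (y 3) (y 0) (y 1) c30 c10 c31'
  intro i
  fin_cases i
  · exact ⟨le_trans d01 (by linarith), ang0, le_trans g02 (by linarith)⟩
  · exact ⟨le_trans d12 (by linarith), ang1, le_trans g13 (by linarith)⟩
  · exact ⟨le_trans d23 (by linarith), ang2, le_trans g20 (by linarith)⟩
  · exact ⟨le_trans d30 (by linarith), ang3, le_trans g31 (by linarith)⟩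

theorem eps_square_rigidity :
    ∃ C : ℝ, 0 < C ∧ ∃ ε₀ : ℝ, 0 < ε₀ ∧ ∀ ε : ℝ, 0 < ε → ε < ε₀ →
      ∀ x : Fin 4 → EuclideanSpace ℝ (Fin 2),
        (∀ i j : Fin 4, i ≠ j → dist (x i) (x j) ∈ Set.Ioo (1 - ε) (Real.sqrt 2 + ε)) →
        ∃ σ : Equiv.Perm (Fin 4), ∀ i : Fin 4,
          |dist (x (σ i)) (x (σ (i + 1))) - 1| ≤ C * ε ∧
          |EuclideanGeometry.angle (x (σ i)) (x (σ (i + 1))) (x (σ (i + 2))) - π / 2| ≤ C * ε ∧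
          |dist (x (σ i)) (x (σ (i + 2))) - Real.sqrt 2| ≤ C * ε := by
  refine ⟨50, by norm_num, 1/1000, by norm_num, ?_⟩
  intro ε hε0 hε1 x hx
  classical
  obtain ⟨p, hpS, hpmax⟩ := Finset.exists_max_image
    (Finset.univ.filter fun p : Fin 4 × Fin 4 => p.1 ≠ p.2)
    (fun p => dist (x p.1) (x p.2)) ⟨(0,1), by simp⟩
  have hne : p.1 ≠ p.2 := by simpa using (Finset.mem_filter.1 hpS).2
  set i0 := p.1
  set j0 := p.2
  set τ := Equiv.swap (0:Fin 4) i0 with hτ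
  set j1 := τ j0 with hj1def
  have hj1 : j1 ≠ 0 := by
    intro h
    apply hne
    have : τ j1 = τ 0 := by rw [h]
    rw [hj1def, Equiv.swap_apply_self, Equiv.swap_apply_left] at this
    exact this.symm
  set σ := (Equiv.swap (2:Fin 4) j1).trans τ with hσ
  have hσ0 : σ 0 = i0 := by
    rw [hσ]
    simp only [Equiv.trans_apply]
    rw [Equiv.swap_apply_of_ne_of_ne (by decide) (Ne.symm hj1), hτ, Equiv.swap_apply_left]
  have hσ2 : σ 2 = j0 := by
    rw [hσ]
    simp only [Equiv.trans_apply]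
    rw [Equiv.swap_apply_left, hj1def, hτ, Equiv.swap_apply_self]
  refine ⟨σ, ?_⟩
  have hy : ∀ i j : Fin 4, i ≠ j →
      dist (x (σ i)) (x (σ j)) ∈ Set.Ioo (1 - ε) (Real.sqrt 2 + ε) := by
    intro i j h
    exact hx (σ i) (σ j) (fun hh => h (σ.injective hh))
  have hmax : ∀ i j : Fin 4, dist (x (σ i)) (x (σ j)) ≤ dist (x (σ 0)) (x (σ 2)) := by
    intro i j
    rw [hσ0, hσ2]
    rcases eq_or_ne i j with rfl | h
    · simp [dist_nonneg]
    · exact hpmax (σ i, σ j) (Finset.mem_filter.2 ⟨Finset.mem_univ _,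
        fun hh => h (σ.injective hh)⟩)
  have h4 := four_point ε hε0 hε1 (fun k => x (σ k)) hy hmax
  intro i
  exact h4 i
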